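/- For a finite connected simple graph G with at least two vertices, every two distinct lines of G share at most one vertex if and only if G is a complete graph, or a path, or the cycle C4 on four vertices. -/

import Mathlib

/-- `v` lies between `u` and `w` in the shortest-path metric of the graph `G`. -/
def gBtw {V : Type*} (G : SimpleGraph V) (u v w : V) : Prop :=
  u ≠ v ∧ v ≠ w ∧ u ≠ w ∧ G.dist u v + G.dist v w = G.dist u w

/-- The line determined by `x` and `y` in the graph `G`. -/
def gLine {V : Type*} (G : SimpleGraph V) (x y : V) : Set V :=
  {x, y} ∪ {z | gBtw G x z y ∨ gBtw G z x y ∨ gBtw G x y z}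

/-- The set of all (distinct) lines of the graph `G`. -/
def gLines {V : Type*} (G : SimpleGraph V) : Set (Set V) :=
  {L | ∃ x y : V, x ≠ y ∧ L = gLine G x y}

open SimpleGraph

section Helpers

variable {V : Type*} {W : Type*} {G : SimpleGraph V}

lemma mem_gLine_left (x y : V) : x ∈ gLine G x y := Or.inl (Or.inl rfl)

lemma mem_gLine_right (x y : V) : y ∈ gLine G x y := Or.inl (Or.inr rfl)

/-- Membership in a line via collinearity of distances. -/
lemma mem_gLine_of_dists {x y z : V} (hxy : x ≠ y) (hxz : x ≠ z) (hyz : y ≠ z)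
    (h : G.dist x z + G.dist z y = G.dist x y ∨ G.dist z x + G.dist x y = G.dist z y ∨
      G.dist x y + G.dist y z = G.dist x z) : z ∈ gLine G x y := by
  rcases h with h | h | h
  · exact Or.inr (Or.inl ⟨hxz, fun h' => hyz h'.symm, hxy, h⟩)
  · exact Or.inr (Or.inr (Or.inl ⟨fun h' => hxz h'.symm, hxy, fun h' => hyz h'.symm, h⟩))
  · exact Or.inr (Or.inr (Or.inr ⟨hxy, hyz, hxz, h⟩))

/-- If `z` is in the line of `x,y` then the distances are collinear (or z is an endpoint). -/
lemma dists_of_mem_gLine {x y z : V} (hz : z ∈ gLine G x y) (hxz : x ≠ z) (hyz : y ≠ z) :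
    G.dist x z + G.dist z y = G.dist x y ∨ G.dist z x + G.dist x y = G.dist z y ∨
      G.dist x y + G.dist y z = G.dist x z := by
  rcases hz with (h | h) | (h | h | h)
  · exact absurd h.symm hxz
  · exact absurd h.symm hyz
  · exact Or.inl h.2.2.2
  · exact Or.inr (Or.inl h.2.2.2)
  · exact Or.inr (Or.inr h.2.2.2)

/-- A vertex at distance `m+1` from `x` has a neighbour at distance `m` from `x`. -/
lemma exists_adj_dist (hconn : G.Connected) {x v : V} {m : ℕ} (h : G.dist x v = m + 1) :
    ∃ w : V, G.Adj w v ∧ G.dist x w = m := by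
  obtain ⟨p, hp⟩ := (hconn.preconnected v x).exists_walk_length_eq_dist
  rw [SimpleGraph.dist_comm, h] at hp
  cases p with
  | nil => simp at hp
  | cons hadj q =>
    rename_i b
    refine ⟨b, hadj.symm, ?_⟩
    simp only [SimpleGraph.Walk.length_cons] at hp
    have h1 : G.dist x b ≤ m := by
      have hlen := SimpleGraph.dist_le q.reverse
      rw [SimpleGraph.Walk.length_reverse] at hlen
      omega
    have h2 : G.dist x v ≤ G.dist x b + G.dist b v := hconn.dist_triangle
    have h3 : G.dist b v = 1 := SimpleGraph.dist_eq_one_iff_adj.mpr hadj.symm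
    omega

/-- All lines of `G` are the whole vertex set. -/
def AllUniv (G : SimpleGraph V) : Prop := ∀ x y : V, x ≠ y → gLine G x y = Set.univ

lemma allUniv_prop (h : AllUniv G) :
    ∀ L₁ ∈ gLines G, ∀ L₂ ∈ gLines G, L₁ ≠ L₂ → (L₁ ∩ L₂).ncard ≤ 1 := by
  rintro L₁ ⟨x, y, hxy, rfl⟩ L₂ ⟨u, v, huv, rfl⟩ hne
  exact absurd ((h x y hxy).trans (h u v huv).symm) hne

lemma allUniv_coll (h : AllUniv G) (x y z : V) (hxy : x ≠ y) :
    G.dist x z + G.dist z y = G.dist x y ∨ G.dist z x + G.dist x y = G.dist z y ∨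
      G.dist x y + G.dist y z = G.dist x z := by
  by_cases hxz : x = z
  · subst hxz; right; left; simp [SimpleGraph.dist_self]
  by_cases hyz : y = z
  · subst hyz; left; simp [SimpleGraph.dist_self]
  · exact dists_of_mem_gLine (by rw [h x y hxy]; trivial) hxz hyz

lemma iso_dist_le {G' : SimpleGraph W} (e : G ≃g G') {u v : V} (hr : G.Reachable u v) :
    G'.dist (e u) (e v) ≤ G.dist u v := by
  obtain ⟨p, hp⟩ := hr.exists_walk_length_eq_dist
  have := SimpleGraph.dist_le (p.map e.toHom)
  rwa [SimpleGraph.Walk.length_map, hp] at this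

/-- Graph isomorphisms preserve distances. -/
lemma iso_dist {G' : SimpleGraph W} (e : G ≃g G') (u v : V) :
    G'.dist (e u) (e v) = G.dist u v := by
  by_cases hr : G.Reachable u v
  · have h1 := iso_dist_le e hr
    have hr' : G'.Reachable (e u) (e v) := by
      obtain ⟨p⟩ := hr
      exact ⟨p.map e.toHom⟩
    have h2 := iso_dist_le e.symm hr'
    simp only [RelIso.symm_apply_apply] at h2
    omega
  · have hr' : ¬ G'.Reachable (e u) (e v) := by
      intro hr'
      obtain ⟨p⟩ := hr'
      exact hr (by
        have hh : G.Reachable (e.symm (e u)) (e.symm (e v)) := ⟨p.map e.symm.toHom⟩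
        simp only [RelIso.symm_apply_apply] at hh
        exact hh)
    rw [SimpleGraph.dist_eq_zero_of_not_reachable hr,
      SimpleGraph.dist_eq_zero_of_not_reachable hr']

lemma iso_allUniv {G' : SimpleGraph W} (e : G ≃g G') (h : AllUniv G') : AllUniv G := by
  intro x y hxy
  ext w
  simp only [Set.mem_univ, iff_true]
  by_cases hxw : x = w
  · exact hxw ▸ mem_gLine_left x y
  by_cases hyw : y = w
  · exact hyw ▸ mem_gLine_right x y
  have hxy' : e x ≠ e y := fun hh => hxy (e.toEquiv.injective hh)
  have hmem : e w ∈ gLine G' (e x) (e y) := by rw [h _ _ hxy']; trivial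
  have := dists_of_mem_gLine hmem (fun hh => hxw (e.toEquiv.injective hh))
    (fun hh => hyw (e.toEquiv.injective hh))
  simp only [iso_dist e] at this
  exact mem_gLine_of_dists hxy hxw hyw this

end Helpers

section PathCycle

/-- Lower bound for walks in the path graph. -/
lemma pathGraph_walk_length_ge {n : ℕ} {i j : Fin n} (p : (SimpleGraph.pathGraph n).Walk i j) :
    ((j.val : ℤ) - i.val).natAbs ≤ p.length := by
  induction p with
  | nil => simp
  | @cons a b c hadj q ih =>
    rw [SimpleGraph.pathGraph_adj] at hadj
    simp only [SimpleGraph.Walk.length_cons]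
    omega

lemma pathGraph_dist_le {n : ℕ} : ∀ (k : ℕ) (i : Fin n) (h : i.val + k < n),
    (SimpleGraph.pathGraph n).dist i ⟨i.val + k, h⟩ ≤ k := by
  intro k
  induction k with
  | zero => intro i h; simp
  | succ k ih =>
    intro i h
    have : Nonempty (Fin n) := ⟨i⟩
    have hconn : (SimpleGraph.pathGraph n).Connected :=
      ⟨SimpleGraph.pathGraph_preconnected n⟩
    have h' : i.val + k < n := by omega
    have hadj : (SimpleGraph.pathGraph n).Adj ⟨i.val + k, h'⟩ ⟨i.val + (k+1), h⟩ := by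
      rw [SimpleGraph.pathGraph_adj]; left; simp; omega
    have h1 : (SimpleGraph.pathGraph n).dist ⟨i.val + k, h'⟩ ⟨i.val + (k+1), h⟩ = 1 :=
      SimpleGraph.dist_eq_one_iff_adj.mpr hadj
    calc (SimpleGraph.pathGraph n).dist i ⟨i.val + (k+1), h⟩
        ≤ (SimpleGraph.pathGraph n).dist i ⟨i.val + k, h'⟩ +
          (SimpleGraph.pathGraph n).dist ⟨i.val + k, h'⟩ ⟨i.val + (k+1), h⟩ :=
          hconn.dist_triangle
      _ ≤ k + 1 := by have := ih i h'; omega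

lemma pathGraph_dist {n : ℕ} (i j : Fin n) :
    (SimpleGraph.pathGraph n).dist i j = (j.val - i.val) + (i.val - j.val) := by
  have hub : ∀ (a b : Fin n), a.val ≤ b.val →
      (SimpleGraph.pathGraph n).dist a b ≤ b.val - a.val := by
    intro a b hab
    have h : a.val + (b.val - a.val) < n := by have := b.isLt; omega
    have := pathGraph_dist_le (b.val - a.val) a h
    have hb : b = ⟨a.val + (b.val - a.val), h⟩ := by
      apply Fin.ext; simp; omega
    rwa [← hb] at this
  have hlb : ((j.val : ℤ) - i.val).natAbs ≤ (SimpleGraph.pathGraph n).dist i j := by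
    have hconn : (SimpleGraph.pathGraph n).Preconnected := SimpleGraph.pathGraph_preconnected n
    obtain ⟨p, hp⟩ := (hconn i j).exists_walk_length_eq_dist
    have := pathGraph_walk_length_ge p
    omega
  rcases le_total i.val j.val with h | h
  · have := hub i j h; omega
  · have := hub j i h; rw [SimpleGraph.dist_comm] at this; omega

lemma pathGraph_allUniv (n : ℕ) : AllUniv (SimpleGraph.pathGraph n) := by
  intro x y hxy
  ext w
  simp only [Set.mem_univ, iff_true]
  by_cases hxw : x = w
  · exact hxw ▸ mem_gLine_left x y
  by_cases hyw : y = w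
  · exact hyw ▸ mem_gLine_right x y
  apply mem_gLine_of_dists hxy hxw hyw
  have hxy' : x.val ≠ y.val := fun h => hxy (Fin.ext h)
  rw [pathGraph_dist, pathGraph_dist, pathGraph_dist, pathGraph_dist, pathGraph_dist]
  omega

/-- Distance function on the 4-cycle. -/
def c4d : Fin 4 → Fin 4 → ℕ := fun i j => min (j - i).val (i - j).val

lemma cycle4_dist (i j : Fin 4) : (SimpleGraph.cycleGraph 4).dist i j = c4d i j := by
  have hadj : ∀ a b : Fin 4, (SimpleGraph.cycleGraph 4).Adj a b →
      (SimpleGraph.cycleGraph 4).dist a b = 1 := fun a b h =>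
    SimpleGraph.dist_eq_one_iff_adj.mpr h
  have h2 : ∀ a b c : Fin 4, (SimpleGraph.cycleGraph 4).Adj a b →
      (SimpleGraph.cycleGraph 4).Adj b c → a ≠ c → ¬ (SimpleGraph.cycleGraph 4).Adj a c →
      (SimpleGraph.cycleGraph 4).dist a c = 2 := by
    intro a b c hab hbc hac hnadj
    have hub : (SimpleGraph.cycleGraph 4).dist a c ≤ 2 := by
      have := SimpleGraph.dist_le (SimpleGraph.Walk.cons hab (SimpleGraph.Walk.cons hbc
        SimpleGraph.Walk.nil))
      simpa using this
    have hr : (SimpleGraph.cycleGraph 4).Reachable a c :=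
      ⟨SimpleGraph.Walk.cons hab (SimpleGraph.Walk.cons hbc SimpleGraph.Walk.nil)⟩
    have hpos : 0 < (SimpleGraph.cycleGraph 4).dist a c := hr.pos_dist_of_ne hac
    have hne1 : (SimpleGraph.cycleGraph 4).dist a c ≠ 1 := by
      intro h; exact hnadj (SimpleGraph.dist_eq_one_iff_adj.mp h)
    omega
  fin_cases i <;> fin_cases j <;>
    first
      | exact Eq.trans SimpleGraph.dist_self (by decide)
      | exact (hadj _ _ (by decide)).trans (by decide)
      | exact (h2 _ 1 _ (by decide) (by decide) (by decide) (by decide)).trans (by decide)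
      | exact (h2 _ 2 _ (by decide) (by decide) (by decide) (by decide)).trans (by decide)

lemma cycle4_allUniv : AllUniv (SimpleGraph.cycleGraph 4) := by
  intro x y hxy
  ext w
  simp only [Set.mem_univ, iff_true]
  by_cases hxw : x = w
  · exact hxw ▸ mem_gLine_left x y
  by_cases hyw : y = w
  · exact hyw ▸ mem_gLine_right x y
  apply mem_gLine_of_dists hxy hxw hyw
  rw [cycle4_dist, cycle4_dist, cycle4_dist, cycle4_dist, cycle4_dist]
  revert hxy hxw hyw
  revert x y w
  decide

end PathCycle

section Forward

variable {V : Type*} [Fintype V] {G : SimpleGraph V}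

lemma two_le_ncard_inter {L₁ L₂ : Set V} {a b : V} (hab : a ≠ b)
    (ha1 : a ∈ L₁) (ha2 : a ∈ L₂) (hb1 : b ∈ L₁) (hb2 : b ∈ L₂) :
    2 ≤ (L₁ ∩ L₂).ncard := by
  have hsub : ({a, b} : Set V) ⊆ L₁ ∩ L₂ := by
    rintro z (rfl | rfl)
    · exact ⟨ha1, ha2⟩
    · exact ⟨hb1, hb2⟩
  calc 2 = ({a, b} : Set V).ncard := (Set.ncard_pair hab).symm
    _ ≤ (L₁ ∩ L₂).ncard := Set.ncard_le_ncard hsub (Set.toFinite _)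

lemma prop_allUniv (hconn : G.Connected)
    (hP : ∀ L₁ ∈ gLines G, ∀ L₂ ∈ gLines G, L₁ ≠ L₂ → (L₁ ∩ L₂).ncard ≤ 1)
    (hne : G ≠ ⊤) : AllUniv G := by
  classical
  have hLmem : ∀ a b : V, a ≠ b → gLine G a b ∈ gLines G := fun a b h => ⟨a, b, h, rfl⟩
  -- there exist nonadjacent distinct vertices
  have hnonadj : ∃ u v : V, u ≠ v ∧ ¬ G.Adj u v := by
    by_contra h
    push_neg at h
    apply hne
    ext a b
    simp only [SimpleGraph.top_adj]
    exact ⟨fun hab => G.ne_of_adj hab, fun hab => h a b hab⟩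
  -- there exists a pair at distance exactly 2
  have hdist2 : ∃ x z : V, G.dist x z = 2 := by
    by_contra h
    push_neg at h
    have hle : ∀ d : ℕ, ∀ u v : V, G.dist u v = d → d < 2 := by
      intro d
      induction d using Nat.strong_induction_on with
      | _ d ih =>
        intro u v hd
        by_contra hge
        push_neg at hge
        rcases Nat.lt_or_ge d 3 with h3 | h3
        · have hd2 : d = 2 := by omega
          subst hd2
          exact h u v hd
        · have hd' : G.dist u v = (d - 1) + 1 := by omega
          obtain ⟨w, hw, hdw⟩ := exists_adj_dist hconn hd'
          have := ih (d - 1) (by omega) u w hdw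
          omega
    obtain ⟨u, v, huv, hnadj⟩ := hnonadj
    have h1 := hconn.pos_dist_of_ne huv
    have h2 : G.dist u v ≠ 1 := fun hh => hnadj (SimpleGraph.dist_eq_one_iff_adj.mp hh)
    have h3 := hle (G.dist u v) u v rfl
    omega
  obtain ⟨x, z, hxz2⟩ := hdist2
  have hxz : x ≠ z := by
    intro h
    rw [h, SimpleGraph.dist_self] at hxz2
    omega
  obtain ⟨y, hyzadj, hxy1⟩ := exists_adj_dist hconn (show G.dist x z = 1 + 1 from hxz2)
  have hxyadj : G.Adj x y := SimpleGraph.dist_eq_one_iff_adj.mp hxy1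
  have hyz1 : G.dist y z = 1 := SimpleGraph.dist_eq_one_iff_adj.mpr hyzadj
  have hxy : x ≠ y := hxyadj.ne
  have hyzne : y ≠ z := hyzadj.ne
  have line_eq : ∀ a b c d : V, a ≠ b → c ≠ d → ∀ u v : V, u ≠ v →
      u ∈ gLine G a b → u ∈ gLine G c d → v ∈ gLine G a b → v ∈ gLine G c d →
      gLine G a b = gLine G c d := by
    intro a b c d hab hcd u v huv hu1 hu2 hv1 hv2
    by_contra hne'
    have h1 := hP _ (hLmem a b hab) _ (hLmem c d hcd) hne'
    have h2 := two_le_ncard_inter huv hu1 hu2 hv1 hv2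
    omega
  have hyL : y ∈ gLine G x z :=
    mem_gLine_of_dists hxz hxy (Ne.symm hyzne) (Or.inl (by omega))
  have hzLxy : z ∈ gLine G x y :=
    mem_gLine_of_dists hxy hxz hyzne (Or.inr (Or.inr (by omega)))
  have hxLyz : x ∈ gLine G y z :=
    mem_gLine_of_dists hyzne (Ne.symm hxy) (Ne.symm hxz) (Or.inr (Or.inl (by omega)))
  have hxzL : gLine G x y = gLine G x z :=
    line_eq x y x z hxy hxz x y hxy (mem_gLine_left x y) (mem_gLine_left x z)
      (mem_gLine_right x y) hyL
  have hyzL : gLine G y z = gLine G x z :=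
    line_eq y z x z hyzne hxz y z hyzne (mem_gLine_left y z) hyL
      (mem_gLine_right y z) (mem_gLine_right x z)
  -- main claim : every vertex lies on the line of x and z
  have main : ∀ n : ℕ, ∀ w : V, G.dist y w = n → w ∈ gLine G x z := by
    intro n
    induction n using Nat.strong_induction_on with
    | _ n ih =>
      intro w hw
      by_contra hwL
      have hwx : w ≠ x := fun h => hwL (by rw [h]; exact mem_gLine_left x z)
      have hwz : w ≠ z := fun h => hwL (by rw [h]; exact mem_gLine_right x z)
      have hwy : w ≠ y := fun h => hwL (by rw [h]; exact hyL)
      have hA : ¬ (G.dist x w + G.dist w y = G.dist x y ∨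
          G.dist w x + G.dist x y = G.dist w y ∨
          G.dist x y + G.dist y w = G.dist x w) := fun h =>
        hwL (hxzL ▸ mem_gLine_of_dists hxy (Ne.symm hwx) (Ne.symm hwy) h)
      have hB : ¬ (G.dist y w + G.dist w z = G.dist y z ∨
          G.dist w y + G.dist y z = G.dist w z ∨
          G.dist y z + G.dist z w = G.dist y w) := fun h =>
        hwL (hyzL ▸ mem_gLine_of_dists hyzne (Ne.symm hwy) (Ne.symm hwz) h)
      have hC : ¬ (G.dist x w + G.dist w z = G.dist x z ∨
          G.dist w x + G.dist x z = G.dist w z ∨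
          G.dist x z + G.dist z w = G.dist x w) := fun h =>
        hwL (mem_gLine_of_dists hxz (Ne.symm hwx) (Ne.symm hwz) h)
      push_neg at hA hB hC
      have c1 : G.dist w x = G.dist x w := SimpleGraph.dist_comm
      have c2 : G.dist w y = G.dist y w := SimpleGraph.dist_comm
      have c3 : G.dist w z = G.dist z w := SimpleGraph.dist_comm
      have c4 : G.dist y x = G.dist x y := SimpleGraph.dist_comm
      have c5 : G.dist z y = G.dist y z := SimpleGraph.dist_comm
      have t1 : G.dist x w ≤ G.dist x y + G.dist y w := hconn.dist_triangle
      have t2 : G.dist y w ≤ G.dist y x + G.dist x w := hconn.dist_triangle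
      have t3 : G.dist z w ≤ G.dist z y + G.dist y w := hconn.dist_triangle
      have t4 : G.dist y w ≤ G.dist y z + G.dist z w := hconn.dist_triangle
      obtain ⟨hA1, hA2, hA3⟩ := hA
      obtain ⟨hB1, hB2, hB3⟩ := hB
      obtain ⟨hC1, hC2, hC3⟩ := hC
      -- equal distances
      have hax : G.dist x w = G.dist y w := by omega
      have haz : G.dist z w = G.dist y w := by omega
      have hb0 : G.dist y w ≠ 0 := by
        have := hconn.pos_dist_of_ne (Ne.symm hwy)
        omega
      have hb1 : G.dist y w ≠ 1 := by
        intro h1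
        rw [hxz2] at hC1
        omega
      have hn2 : 2 ≤ n := by omega
      obtain ⟨w', hw'adj, hw'⟩ := exists_adj_dist hconn
        (show G.dist y w = (n - 1) + 1 by omega)
      have hw'L : w' ∈ gLine G x z := ih (n - 1) (by omega) w' hw'
      have hw'w : w' ≠ w := hw'adj.ne
      have hw'1 : G.dist w' w = 1 := SimpleGraph.dist_eq_one_iff_adj.mpr hw'adj
      have hyw' : y ≠ w' := by
        intro h
        rw [← h, SimpleGraph.dist_self] at hw'
        omega
      have hyL' : y ∈ gLine G w' w := by
        apply mem_gLine_of_dists hw'w (Ne.symm hyw') hwy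
        right; left
        rw [hw', hw'1, hw]
        omega
      have hneq : gLine G w' w ≠ gLine G x z := fun h => hwL (h ▸ mem_gLine_right w' w)
      have h1 := hP _ (hLmem w' w hw'w) _ (hLmem x z hxz) hneq
      have h2 := two_le_ncard_inter hyw' hyL' hyL (mem_gLine_left w' w) hw'L
      omega
  have huniv : gLine G x z = Set.univ := Set.eq_univ_of_forall (fun w => main _ w rfl)
  intro u v huv
  by_cases h : gLine G u v = gLine G x z
  · rw [h, huniv]
  · exfalso
    have h1 := hP _ (hLmem u v huv) _ (hLmem x z hxz) h
    have hu : u ∈ gLine G x z := by rw [huniv]; trivial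
    have hv : v ∈ gLine G x z := by rw [huniv]; trivial
    have h2 := two_le_ncard_inter huv (mem_gLine_left (G := G) u v) hu
      (mem_gLine_right (G := G) u v) hv
    omega

lemma allUniv_classify (hconn : G.Connected) (h2 : 2 ≤ Fintype.card V) (hU : AllUniv G) :
    (∃ n : ℕ, Nonempty (G ≃g SimpleGraph.pathGraph n)) ∨
      Nonempty (G ≃g SimpleGraph.cycleGraph 4) := by
  classical
  have hVne : Nonempty V := Fintype.card_pos_iff.mp (by omega)
  have coll := allUniv_coll hU
  -- a diametral pair
  obtain ⟨p0, -, hmax⟩ := Finset.exists_max_image (Finset.univ : Finset (V × V))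
    (fun p : V × V => G.dist p.1 p.2) ⟨(Classical.arbitrary V, Classical.arbitrary V),
      Finset.mem_univ _⟩
  set x := p0.1 with hx
  set y := p0.2 with hy
  set D := G.dist x y with hD
  have hmax' : ∀ u v : V, G.dist u v ≤ D := fun u v => hmax (u, v) (Finset.mem_univ _)
  have hD1 : 1 ≤ D := by
    obtain ⟨a, b, hab⟩ := Fintype.exists_pair_of_one_lt_card (α := V) (by omega)
    have h1 := hconn.pos_dist_of_ne hab
    have h2 := hmax' a b
    omega
  have hxy : x ≠ y := by
    intro h
    rw [hD, h, SimpleGraph.dist_self] at hD1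
    omega
  have hbetw : ∀ v : V, G.dist x v + G.dist v y = D := by
    intro v
    rcases coll x y v hxy with h | h | h
    · exact h
    · have h1 := hmax' v y
      have hvx : G.dist v x = 0 := by omega
      have hvx' : v = x := hconn.dist_eq_zero_iff.mp hvx
      subst hvx'
      simp [SimpleGraph.dist_self, hD]
    · have h1 := hmax' x v
      have hvy : G.dist y v = 0 := by omega
      have hvy' : y = v := hconn.dist_eq_zero_iff.mp hvy
      rw [← hvy', SimpleGraph.dist_self]
      omega
  have hfle : ∀ v : V, G.dist x v ≤ D := fun v => by have := hbetw v; omega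
  have fiber : ∀ u v : V, u ≠ v → G.dist x u = G.dist x v →
      G.dist u v = 2 * G.dist x u ∧ 2 * G.dist x u = D := by
    intro u v huv hf
    have h1 := coll u v x huv
    have c1 : G.dist u x = G.dist x u := SimpleGraph.dist_comm
    have c2 : G.dist v x = G.dist x v := SimpleGraph.dist_comm
    have hpos := hconn.pos_dist_of_ne huv
    have hd1 : G.dist u v = 2 * G.dist x u := by
      rcases h1 with h | h | h <;> omega
    have h2 := coll u v y huv
    have hbu := hbetw u
    have hbv := hbetw v
    have c4 : G.dist u y = G.dist y u := SimpleGraph.dist_comm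
    have c5 : G.dist v y = G.dist y v := SimpleGraph.dist_comm
    refine ⟨hd1, ?_⟩
    rcases h2 with h | h | h <;> omega
  by_cases hinj : ∀ u v : V, G.dist x u = G.dist x v → u = v
  · -- path case
    left
    have hsurj : ∀ k : ℕ, k ≤ D → ∃ v : V, G.dist x v = k := by
      have key : ∀ j : ℕ, j ≤ D → ∃ v, G.dist x v = D - j := by
        intro j
        induction j with
        | zero => exact fun _ => ⟨y, by omega⟩
        | succ j ih =>
          intro hj
          obtain ⟨v, hv⟩ := ih (by omega)
          have hv' : G.dist x v = (D - (j + 1)) + 1 := by omega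
          obtain ⟨w, hw, hwd⟩ := exists_adj_dist hconn hv'
          exact ⟨w, by omega⟩
      intro k hk
      obtain ⟨v, hv⟩ := key (D - k) (by omega)
      exact ⟨v, by omega⟩
    refine ⟨D + 1, ⟨?_⟩⟩
    have hflt : ∀ v : V, G.dist x v < D + 1 := fun v => by have := hfle v; omega
    let f : V → Fin (D + 1) := fun v => ⟨G.dist x v, hflt v⟩
    have hfinj : Function.Injective f := by
      intro u v h
      exact hinj u v (by simpa [f, Fin.ext_iff] using h)
    have hfsurj : Function.Surjective f := by
      intro k
      obtain ⟨v, hv⟩ := hsurj k.val (by omega)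
      exact ⟨v, Fin.ext (by simpa [f] using hv)⟩
    refine ⟨Equiv.ofBijective f ⟨hfinj, hfsurj⟩, @fun a b => ?_⟩
    rw [SimpleGraph.pathGraph_adj]
    show G.dist x a + 1 = G.dist x b ∨ G.dist x b + 1 = G.dist x a ↔ G.Adj a b
    constructor
    · rintro (h | h)
      · obtain ⟨w, hw, hwd⟩ := exists_adj_dist hconn
          (show G.dist x b = G.dist x a + 1 by omega)
        have hwa : w = a := hinj w a (by omega)
        rw [hwa] at hw
        exact hw
      · obtain ⟨w, hw, hwd⟩ := exists_adj_dist hconn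
          (show G.dist x a = G.dist x b + 1 by omega)
        have hwb : w = b := hinj w b (by omega)
        rw [hwb] at hw
        exact hw.symm
    · intro hab
      have hd1 : G.dist a b = 1 := SimpleGraph.dist_eq_one_iff_adj.mpr hab
      have t1 : G.dist x b ≤ G.dist x a + G.dist a b := hconn.dist_triangle
      have t2 : G.dist x a ≤ G.dist x b + G.dist b a := hconn.dist_triangle
      have c : G.dist b a = G.dist a b := SimpleGraph.dist_comm
      have hne' : G.dist x a ≠ G.dist x b := fun h => hab.ne (hinj a b h)
      omega
  · -- C4 case
    right
    push_neg at hinj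
    obtain ⟨u, v, hf, huv⟩ := hinj
    obtain ⟨hduv, hkD⟩ := fiber u v huv hf
    have hk1 : 1 ≤ G.dist x u := by
      by_contra hk0
      push_neg at hk0
      have h1 : u = x := hconn.dist_eq_zero_iff.mp (by omega)
      have h2 : v = x := hconn.dist_eq_zero_iff.mp (by omega)
      exact huv (h1.trans h2.symm)
    obtain ⟨wu, hwu, hwud⟩ := exists_adj_dist hconn
      (show G.dist x u = (G.dist x u - 1) + 1 by omega)
    obtain ⟨wv, hwv, hwvd⟩ := exists_adj_dist hconn
      (show G.dist x v = (G.dist x v - 1) + 1 by omega)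
    have hww : wu = wv := by
      by_contra hne'
      obtain ⟨-, h2'⟩ := fiber wu wv hne' (by rw [hwud, hwvd, ← hf])
      omega
    subst hww
    have hD2 : D = 2 := by
      have t : G.dist u v ≤ G.dist u wu + G.dist wu v := hconn.dist_triangle
      have d1 : G.dist u wu = 1 := SimpleGraph.dist_eq_one_iff_adj.mpr hwu.symm
      have d2 : G.dist wu v = 1 := SimpleGraph.dist_eq_one_iff_adj.mpr hwv
      omega
    have hk2 : G.dist x u = 1 := by omega
    have hxv1 : G.dist x v = 1 := by omega
    have hxy2 : G.dist x y = 2 := by omega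
    have huv2 : G.dist u v = 2 := by omega
    have huy1 : G.dist u y = 1 := by have := hbetw u; omega
    have hvy1 : G.dist v y = 1 := by have := hbetw v; omega
    -- distinctness
    have dne : ∀ a b : V, G.dist a b ≠ 0 → a ≠ b := by
      intro a b h hab
      rw [hab, SimpleGraph.dist_self] at h
      exact h rfl
    have hxu : x ≠ u := dne x u (by omega)
    have hxv : x ≠ v := dne x v (by omega)
    have hxy' : x ≠ y := hxy
    have huy : u ≠ y := dne u y (by omega)
    have hvy : v ≠ y := dne v y (by omega)
    -- coverage
    have hcov : ∀ w : V, w = x ∨ w = u ∨ w = y ∨ w = v := by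
      intro w
      have hbw := hbetw w
      rcases Nat.lt_or_ge (G.dist x w) 1 with h0 | h1
      · exact Or.inl (hconn.dist_eq_zero_iff.mp (by omega : G.dist x w = 0)).symm
      rcases Nat.lt_or_ge (G.dist x w) 2 with h1' | h2'
      · -- middle level
        by_cases hwu' : w = u
        · exact Or.inr (Or.inl hwu')
        by_cases hwv' : w = v
        · exact Or.inr (Or.inr (Or.inr hwv'))
        exfalso
        have hxw1 : G.dist x w = 1 := by omega
        obtain ⟨hwu2, -⟩ := fiber w u hwu' (by omega)
        obtain ⟨hwv2, -⟩ := fiber w v hwv' (by omega)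
        have hcw := coll u v w huv
        have c1 : G.dist u w = G.dist w u := SimpleGraph.dist_comm
        have c2 : G.dist v w = G.dist w v := SimpleGraph.dist_comm
        rcases hcw with h | h | h <;> omega
      · have hwy : G.dist w y = 0 := by have := hfle w; omega
        exact Or.inr (Or.inr (Or.inl (hconn.dist_eq_zero_iff.mp hwy)))
    -- adjacency facts
    have hadj_xu : G.Adj x u := SimpleGraph.dist_eq_one_iff_adj.mp hk2
    have hadj_xv : G.Adj x v := SimpleGraph.dist_eq_one_iff_adj.mp hxv1
    have hadj_uy : G.Adj u y := SimpleGraph.dist_eq_one_iff_adj.mp huy1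
    have hadj_vy : G.Adj v y := SimpleGraph.dist_eq_one_iff_adj.mp hvy1
    have hnadj_xy : ¬ G.Adj x y := fun h => by
      have := SimpleGraph.dist_eq_one_iff_adj.mpr h
      omega
    have hnadj_uv : ¬ G.Adj u v := fun h => by
      have := SimpleGraph.dist_eq_one_iff_adj.mpr h
      omega
    let g : Fin 4 → V := fun i => if i = 0 then x else if i = 1 then u else if i = 2 then y else v
    have hgbij : Function.Bijective g := by
      constructor
      · intro i j h
        fin_cases i <;> fin_cases j <;>
          first
            | rfl
            | exact absurd h hxu | exact absurd h (Ne.symm hxu)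
            | exact absurd h hxv | exact absurd h (Ne.symm hxv)
            | exact absurd h hxy' | exact absurd h (Ne.symm hxy')
            | exact absurd h huy | exact absurd h (Ne.symm huy)
            | exact absurd h huv | exact absurd h (Ne.symm huv)
            | exact absurd h hvy | exact absurd h (Ne.symm hvy)
      · intro w
        rcases hcov w with rfl | rfl | rfl | rfl
        · exact ⟨0, rfl⟩
        · exact ⟨1, rfl⟩
        · exact ⟨2, rfl⟩
        · exact ⟨3, rfl⟩
    have iso : SimpleGraph.cycleGraph 4 ≃g G := by
      refine ⟨Equiv.ofBijective g hgbij, @fun i j => ?_⟩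
      fin_cases i <;> fin_cases j <;>
        first
          | exact iff_of_false (fun h => G.irrefl h) (by decide)
          | exact iff_of_true hadj_xu (by decide)
          | exact iff_of_true hadj_xu.symm (by decide)
          | exact iff_of_true hadj_xv (by decide)
          | exact iff_of_true hadj_xv.symm (by decide)
          | exact iff_of_true hadj_uy (by decide)
          | exact iff_of_true hadj_uy.symm (by decide)
          | exact iff_of_true hadj_vy (by decide)
          | exact iff_of_true hadj_vy.symm (by decide)
          | exact iff_of_false hnadj_xy (by decide)
          | exact iff_of_false (fun h => hnadj_xy h.symm) (by decide)
          | exact iff_of_false hnadj_uv (by decide)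
          | exact iff_of_false (fun h => hnadj_uv h.symm) (by decide)
    exact ⟨iso.symm⟩

lemma top_prop (h : G = ⊤) :
    ∀ L₁ ∈ gLines G, ∀ L₂ ∈ gLines G, L₁ ≠ L₂ → (L₁ ∩ L₂).ncard ≤ 1 := by
  subst h
  have hline : ∀ x y : V, x ≠ y → gLine (⊤ : SimpleGraph V) x y = {x, y} := by
    intro x y hxy
    apply Set.union_eq_self_of_subset_right
    rintro z (h | h | h) <;>
    · obtain ⟨h1, h2, h3, h4⟩ := h
      rw [SimpleGraph.dist_top_of_ne h1, SimpleGraph.dist_top_of_ne h2,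
        SimpleGraph.dist_top_of_ne h3] at h4
      exact absurd h4 (by omega)
  have key : ∀ (x y a b : V), a ≠ b → a ∈ ({x, y} : Set V) → b ∈ ({x, y} : Set V) →
      ({x, y} : Set V) = {a, b} := by
    intro x y a b hab ha hb
    rcases ha with rfl | rfl <;> rcases hb with rfl | rfl
    · exact absurd rfl hab
    · rfl
    · exact Set.pair_comm _ _
    · exact absurd rfl hab
  rintro L₁ ⟨x, y, hxy, rfl⟩ L₂ ⟨u, v, huv, rfl⟩ hne
  rw [hline x y hxy, hline u v huv] at hne ⊢
  by_contra hcon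
  push_neg at hcon
  obtain ⟨a, b, ha, hb, hab⟩ := (Set.one_lt_ncard_iff (Set.toFinite _)).mp hcon
  exact hne ((key x y a b hab ha.1 hb.1).trans (key u v a b hab ha.2 hb.2).symm)

end Forward

theorem stmt_10 (V : Type*) [Fintype V] (G : SimpleGraph V) (hconn : G.Connected)
    (h2 : 2 ≤ Fintype.card V) :
    (∀ L₁ ∈ gLines G, ∀ L₂ ∈ gLines G, L₁ ≠ L₂ → (L₁ ∩ L₂).ncard ≤ 1) ↔
      (G = ⊤ ∨ (∃ n : ℕ, Nonempty (G ≃g SimpleGraph.pathGraph n)) ∨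
        Nonempty (G ≃g SimpleGraph.cycleGraph 4)) := by
  constructor
  · intro hP
    by_cases htop : G = ⊤
    · exact Or.inl htop
    · exact Or.inr (allUniv_classify hconn h2 (prop_allUniv hconn hP htop))
  · rintro (htop | h | h)
    · exact top_prop htop
    · obtain ⟨n, ⟨e⟩⟩ := h
      exact allUniv_prop (iso_allUniv e (pathGraph_allUniv n))
    · obtain ⟨e⟩ := h
      exact allUniv_prop (iso_allUniv e cycle4_allUniv)
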